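/- For every c ∈ [0,1] there exist t ∈ [0,1] and λ ∈ [0,1] such that the randomized threshold classifier h* := λ·𝟙[η ≥ t] + (1−λ)·𝟙[η > t] satisfies ∫ h* dμ = c, and TP(h) ≤ TP(h*) for every classifier h : X → [0,1] with ∫ h dμ = c. That is, the maximum of TP over classifiers with prediction rate c is attained by a randomized threshold classifier on η. -/

import Mathlib

open MeasureTheory Set

private lemma int_of_bdd' {X : Type*} [MeasurableSpace X] (μ : Measure X) [IsFiniteMeasure μ]
    {f : X → ℝ} (hf : Measurable f) (C : ℝ) (h : ∀ x, |f x| ≤ C) : Integrable f μ :=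
  ⟨hf.aestronglyMeasurable, HasFiniteIntegral.of_bounded (C := C) (ae_of_all _ h)⟩

theorem tp_max_at_randomized_threshold
    {X : Type*} [MeasurableSpace X] (μ : Measure X) [IsProbabilityMeasure μ]
    (η : X → ℝ) (hη : Measurable η) (hη01 : ∀ x, η x ∈ Icc (0:ℝ) 1)
    (c : ℝ) (hc : c ∈ Icc (0:ℝ) 1) :
    ∃ t ∈ Icc (0:ℝ) 1, ∃ l ∈ Icc (0:ℝ) 1,
      (∫ x, (l * ({x | t ≤ η x}.indicator (fun _ => (1:ℝ)) x) +
          (1 - l) * ({x | t < η x}.indicator (fun _ => (1:ℝ)) x)) ∂μ) = c ∧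
      ∀ h : X → ℝ, Measurable h → (∀ x, h x ∈ Icc (0:ℝ) 1) → (∫ x, h x ∂μ) = c →
        (∫ x, η x * h x ∂μ) ≤
          ∫ x, η x * (l * ({x | t ≤ η x}.indicator (fun _ => (1:ℝ)) x) +
            (1 - l) * ({x | t < η x}.indicator (fun _ => (1:ℝ)) x)) ∂μ := by
  obtain ⟨hc0, hc1⟩ := hc
  set S : Set ℝ := {s : ℝ | 0 ≤ s ∧ (μ {x | s < η x}).toReal ≤ c} with hSdef
  have h1S : (1:ℝ) ∈ S := by
    refine ⟨by norm_num, ?_⟩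
    have hempty : {x | (1:ℝ) < η x} = ∅ := by
      ext x; simp [not_lt.2 (hη01 x).2]
    simp [hempty, hc0]
  have hSne : S.Nonempty := ⟨1, h1S⟩
  have hSbdd : BddBelow S := ⟨0, fun s hs => hs.1⟩
  set t := sInf S with htdef
  have ht0 : 0 ≤ t := le_csInf hSne (fun s hs => hs.1)
  have ht1 : t ≤ 1 := csInf_le hSbdd h1S
  have hmge : MeasurableSet {x | t ≤ η x} := measurableSet_le measurable_const hη
  have hmgt : ∀ s : ℝ, MeasurableSet {x | s < η x} := fun s =>
    measurableSet_lt measurable_const hη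
  -- b ≤ c
  have hb : (μ {x | t < η x}).toReal ≤ c := by
    have hmono : Monotone (fun n : ℕ => {x | t + 1/(n+1) < η x}) := by
      intro n m hnm x hx
      have h1 : (1:ℝ)/(m+1) ≤ 1/(n+1) := by
        apply one_div_le_one_div_of_le
        · positivity
        · linarith [(Nat.cast_le (α := ℝ)).mpr hnm]
      simp only [mem_setOf_eq] at hx ⊢
      linarith
    have hU : {x | t < η x} = ⋃ n : ℕ, {x | t + 1/(n+1) < η x} := by
      ext x
      simp only [mem_iUnion, mem_setOf_eq]
      constructor
      · intro hx
        obtain ⟨n, hn⟩ := exists_nat_one_div_lt (sub_pos.2 hx)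
        exact ⟨n, by linarith⟩
      · rintro ⟨n, hn⟩
        have : (0:ℝ) < 1/(n+1) := by positivity
        linarith
    have hle : ∀ n : ℕ, μ {x | t + 1/(n+1) < η x} ≤ ENNReal.ofReal c := by
      intro n
      have hpos : (0:ℝ) < 1/(n+1) := by positivity
      have hlt : t < t + 1/(n+1) := by linarith
      obtain ⟨s, hsS, hs⟩ := exists_lt_of_csInf_lt hSne hlt
      have hsub : {x | t + 1/(n+1) < η x} ⊆ {x | s < η x} := by
        intro x hx; exact lt_trans hs hx
      calc μ {x | t + 1/(n+1) < η x} ≤ μ {x | s < η x} := measure_mono hsub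
        _ ≤ ENNReal.ofReal c := by
            rw [← ENNReal.ofReal_toReal (measure_ne_top μ _)]
            exact ENNReal.ofReal_le_ofReal hsS.2
    rw [hU, hmono.measure_iUnion]
    calc (⨆ n : ℕ, μ {x | t + 1/(n+1) < η x}).toReal
        ≤ (ENNReal.ofReal c).toReal :=
          ENNReal.toReal_mono ENNReal.ofReal_ne_top (iSup_le hle)
      _ = c := ENNReal.toReal_ofReal hc0
  -- c ≤ a
  have ha : c ≤ (μ {x | t ≤ η x}).toReal := by
    have hanti : Antitone (fun n : ℕ => {x | t - 1/(n+1) < η x}) := by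
      intro n m hnm x hx
      have h1 : (1:ℝ)/(m+1) ≤ 1/(n+1) := by
        apply one_div_le_one_div_of_le
        · positivity
        · linarith [(Nat.cast_le (α := ℝ)).mpr hnm]
      simp only [mem_setOf_eq] at hx ⊢
      linarith
    have hI : {x | t ≤ η x} = ⋂ n : ℕ, {x | t - 1/(n+1) < η x} := by
      ext x
      simp only [mem_iInter, mem_setOf_eq]
      constructor
      · intro hx n
        have : (0:ℝ) < 1/(n+1) := by positivity
        linarith
      · intro hx
        by_contra hlt
        push_neg at hlt
        obtain ⟨n, hn⟩ := exists_nat_one_div_lt (sub_pos.2 hlt)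
        have := hx n
        linarith
    have hge : ∀ n : ℕ, ENNReal.ofReal c ≤ μ {x | t - 1/(n+1) < η x} := by
      intro n
      by_cases hneg : t - 1/(n+1) < 0
      · have huniv : {x | t - 1/(n+1) < η x} = univ :=
          eq_univ_of_forall fun x => lt_of_lt_of_le hneg (hη01 x).1
        rw [huniv, measure_univ]
        exact ENNReal.ofReal_le_one.mpr hc1
      · push_neg at hneg
        have hpos : (0:ℝ) < 1/(n+1) := by positivity
        have hnotS : t - 1/(n+1) ∉ S := by
          intro hmem
          have := csInf_le hSbdd hmem
          rw [← htdef] at this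
          linarith
        have hgt : c < (μ {x | t - 1/(n+1) < η x}).toReal := by
          by_contra hle
          push_neg at hle
          exact hnotS ⟨hneg, hle⟩
        rw [← ENNReal.ofReal_toReal (measure_ne_top μ {x | t - 1/(n+1) < η x})]
        exact ENNReal.ofReal_le_ofReal hgt.le
    rw [hI, hanti.measure_iInter (fun n => (hmgt _).nullMeasurableSet) ⟨0, measure_ne_top μ _⟩]
    have hne : (⨅ n : ℕ, μ {x | t - 1/(n+1) < η x}) ≠ ⊤ :=
      ne_top_of_le_ne_top (measure_ne_top μ _) (iInf_le _ 0)
    calc c = (ENNReal.ofReal c).toReal := (ENNReal.toReal_ofReal hc0).symm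
      _ ≤ _ := ENNReal.toReal_mono hne (le_iInf hge)
  set a : ℝ := (μ {x | t ≤ η x}).toReal with hadef
  set b : ℝ := (μ {x | t < η x}).toReal with hbdef
  have hba : b ≤ a :=
    ENNReal.toReal_mono (measure_ne_top μ _) (measure_mono (setOf_subset_setOf.mpr fun x hx => le_of_lt hx))
  set l : ℝ := if a = b then 1 else (c - b)/(a - b) with hldef
  have hl0 : 0 ≤ l := by
    rw [hldef]; split
    · norm_num
    · exact div_nonneg (by linarith) (by linarith)
  have hl1 : l ≤ 1 := by
    rw [hldef]; split
    · exact le_refl 1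
    · rename_i hab
      have hab' : 0 < a - b := lt_of_le_of_ne (by linarith) (by intro h; exact hab (by linarith))
      rw [div_le_one hab']
      linarith
  have hlc : l * a + (1 - l) * b = c := by
    by_cases hab : a = b
    · have hca : c = a := le_antisymm ha (hab ▸ hb)
      rw [hldef, if_pos hab]
      linarith
    · have hab' : a - b ≠ 0 := by
        intro h; exact hab (by linarith)
      rw [hldef, if_neg hab]
      field_simp
      ring
  -- integrability setup
  have hindge_meas : Measurable ({x | t ≤ η x}.indicator (fun _ => (1:ℝ))) :=
    measurable_const.indicator hmge
  have hindgt_meas : Measurable ({x | t < η x}.indicator (fun _ => (1:ℝ))) :=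
    measurable_const.indicator (hmgt t)
  have hHmeas : Measurable (fun x => l * ({x | t ≤ η x}.indicator (fun _ => (1:ℝ)) x) +
      (1 - l) * ({x | t < η x}.indicator (fun _ => (1:ℝ)) x)) :=
    (hindge_meas.const_mul l).add (hindgt_meas.const_mul (1 - l))
  have hindge01 : ∀ x, 0 ≤ {x | t ≤ η x}.indicator (fun _ => (1:ℝ)) x ∧
      {x | t ≤ η x}.indicator (fun _ => (1:ℝ)) x ≤ 1 := by
    intro x; by_cases hx : x ∈ {x | t ≤ η x} <;> simp [hx]
  have hindgt01 : ∀ x, 0 ≤ {x | t < η x}.indicator (fun _ => (1:ℝ)) x ∧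
      {x | t < η x}.indicator (fun _ => (1:ℝ)) x ≤ 1 := by
    intro x; by_cases hx : x ∈ {x | t < η x} <;> simp [hx]
  have hH01 : ∀ x, 0 ≤ l * ({x | t ≤ η x}.indicator (fun _ => (1:ℝ)) x) +
      (1 - l) * ({x | t < η x}.indicator (fun _ => (1:ℝ)) x) ∧
      l * ({x | t ≤ η x}.indicator (fun _ => (1:ℝ)) x) +
      (1 - l) * ({x | t < η x}.indicator (fun _ => (1:ℝ)) x) ≤ 1 := by
    intro x
    obtain ⟨i1, i2⟩ := hindge01 x
    obtain ⟨j1, j2⟩ := hindgt01 x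
    constructor <;> nlinarith
  have hHint : Integrable (fun x => l * ({x | t ≤ η x}.indicator (fun _ => (1:ℝ)) x) +
      (1 - l) * ({x | t < η x}.indicator (fun _ => (1:ℝ)) x)) μ := by
    refine int_of_bdd' μ hHmeas 1 fun x => abs_le.mpr ⟨?_, (hH01 x).2⟩
    linarith [(hH01 x).1]
  have hIge : ∫ x, ({x | t ≤ η x}.indicator (fun _ => (1:ℝ)) x) ∂μ = a := by
    rw [hadef]; exact integral_indicator_one (μ := μ) hmge
  have hIgt : ∫ x, ({x | t < η x}.indicator (fun _ => (1:ℝ)) x) ∂μ = b := by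
    rw [hbdef]; exact integral_indicator_one (μ := μ) (hmgt t)
  have hintge : Integrable ({x | t ≤ η x}.indicator (fun _ => (1:ℝ))) μ := by
    refine int_of_bdd' μ hindge_meas 1 fun x => abs_le.mpr ⟨?_, (hindge01 x).2⟩
    linarith [(hindge01 x).1]
  have hintgt : Integrable ({x | t < η x}.indicator (fun _ => (1:ℝ))) μ := by
    refine int_of_bdd' μ hindgt_meas 1 fun x => abs_le.mpr ⟨?_, (hindgt01 x).2⟩
    linarith [(hindgt01 x).1]
  have hmean : (∫ x, (l * ({x | t ≤ η x}.indicator (fun _ => (1:ℝ)) x) +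
      (1 - l) * ({x | t < η x}.indicator (fun _ => (1:ℝ)) x)) ∂μ) = c := by
    rw [integral_add (hintge.const_mul l) (hintgt.const_mul (1 - l)),
      integral_const_mul, integral_const_mul, hIge, hIgt, hlc]
  refine ⟨t, ⟨ht0, ht1⟩, l, ⟨hl0, hl1⟩, hmean, ?_⟩
  intro h hhm hh01 hhc
  set H : X → ℝ := fun x => l * ({x | t ≤ η x}.indicator (fun _ => (1:ℝ)) x) +
      (1 - l) * ({x | t < η x}.indicator (fun _ => (1:ℝ)) x) with hHdef
  -- pointwise key inequality
  have hpt : ∀ x, 0 ≤ (η x - t) * (H x - h x) := by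
    intro x
    rcases lt_trichotomy (η x) t with hx | hx | hx
    · have h1 : x ∉ {x | t ≤ η x} := by simp [mem_setOf_eq]; linarith
      have h2 : x ∉ {x | t < η x} := by simp [mem_setOf_eq]; linarith
      have hH0 : H x = 0 := by simp [hHdef, indicator_of_notMem h1, indicator_of_notMem h2]
      rw [hH0]
      have := (hh01 x).1
      nlinarith
    · simp [hx]
    · have h1 : x ∈ {x | t ≤ η x} := le_of_lt hx
      have h2 : x ∈ {x | t < η x} := hx
      have hH1 : H x = 1 := by
        simp [hHdef, indicator_of_mem h1, indicator_of_mem h2]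
      rw [hH1]
      have := (hh01 x).2
      apply mul_nonneg <;> linarith
  -- integrabilities
  have habs : ∀ x, |η x| ≤ 1 := fun x => abs_le.mpr ⟨by linarith [(hη01 x).1], (hη01 x).2⟩
  have hih : Integrable h μ := by
    refine int_of_bdd' μ hhm 1 fun x => abs_le.mpr ⟨?_, (hh01 x).2⟩
    linarith [(hh01 x).1]
  have hH01' : ∀ x, 0 ≤ H x ∧ H x ≤ 1 := hH01
  have hiηH : Integrable (fun x => η x * H x) μ := by
    refine int_of_bdd' μ (hη.mul hHmeas) 1 fun x => ?_
    rw [abs_mul]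
    exact mul_le_one₀ (habs x) (abs_nonneg _) (abs_le.mpr ⟨by linarith [(hH01' x).1], (hH01' x).2⟩)
  have hiηh : Integrable (fun x => η x * h x) μ := by
    refine int_of_bdd' μ (hη.mul hhm) 1 fun x => ?_
    rw [abs_mul]
    exact mul_le_one₀ (habs x) (abs_nonneg _) (abs_le.mpr ⟨by linarith [(hh01 x).1], (hh01 x).2⟩)
  have hkey : 0 ≤ ∫ x, (η x - t) * (H x - h x) ∂μ := integral_nonneg hpt
  have heq : (fun x => (η x - t) * (H x - h x)) =
      fun x => (η x * H x - η x * h x) - (t * H x - t * h x) := by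
    funext x; ring
  have i3 : Integrable (fun x => η x * H x - η x * h x) μ := hiηH.sub hiηh
  have i4 : Integrable (fun x => t * H x - t * h x) μ := (hHint.const_mul t).sub (hih.const_mul t)
  rw [heq, integral_sub i3 i4,
    integral_sub hiηH hiηh, integral_sub (hHint.const_mul t) (hih.const_mul t),
    integral_const_mul, integral_const_mul] at hkey
  have hHc : (∫ x, H x ∂μ) = c := hmean
  rw [hHc, hhc] at hkey
  show (∫ x, η x * h x ∂μ) ≤ ∫ x, η x * H x ∂μ
  linarith
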